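/- Let Ω = ℕ, W_i the indicator of state i, and α_i > 0 bounded above by A < ∞. Set the original forecasts p_i = 0 for all i, scored by weighted Brier score α_i(x−q)². Then for any rival forecasts {q_i} with q_i ≠ 0 for some i, there exists ω ∈ ℕ such that Σ_{i=1}^∞ α_i [W_i(ω) − q_i]² ≥ Σ_{i=1}^∞ α_i W_i(ω)². That is, no rival set of forecasts simply dominates the forecasts p_i = 0 in total weighted Brier score. -/

import Mathlib

/-- with state space `ℕ`, indicators `W_i`, positive weights
`α_i ≤ A`, original forecasts `p_i = 0` scored by weighted Brier score, no
rival set of forecasts `{q_i}` (with some `q_i ≠ 0`) simply dominates: there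
is a state where the rival total weighted Brier score is at least the
original one.  (Total scores are taken in `ℝ≥0∞` so that a possibly
divergent rival total is handled correctly.) -/
theorem no_simple_dominance_weighted_brier (α : ℕ → ℝ) (A : ℝ)
    (hα0 : ∀ i, 0 < α i) (hαA : ∀ i, α i ≤ A)
    (q : ℕ → ℝ) (hq : ∃ i, q i ≠ 0) :
    ∃ ω : ℕ,
      (∑' i : ℕ, ENNReal.ofReal (α i * ((if ω = i then (1:ℝ) else 0))^2))
        ≤ ∑' i : ℕ, ENNReal.ofReal (α i * ((if ω = i then (1:ℝ) else 0) - q i)^2) := by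
  classical
  set g : ℕ → ℝ := fun i => α i * q i ^ 2 with hg_def
  have hgnn : ∀ i, 0 ≤ g i := fun i => mul_nonneg (hα0 i).le (sq_nonneg _)
  set F : ℕ → ENNReal := fun i => ENNReal.ofReal (g i) with hF_def
  by_cases hD : (∑' i, F i) = ⊤
  · -- divergent rival total: any ω works, take ω = 0
    refine ⟨0, le_top.trans ?_⟩
    have hsplit : (∑' i, F i) = F 0 + ∑' i, (if i = 0 then 0 else F i) := by
      rw [ENNReal.tsum_eq_add_tsum_ite 0]
      congr 1
      refine tsum_congr fun i => ?_
      by_cases hi : i = 0 <;> simp [hi]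
    have htail : (∑' i, (if i = 0 then 0 else F i)) = ⊤ := by
      by_contra hne
      have : (∑' i, F i) ≠ ⊤ := by
        rw [hsplit]
        exact ENNReal.add_ne_top.2 ⟨ENNReal.ofReal_ne_top, hne⟩
      exact this hD
    rw [← htail]
    apply ENNReal.tsum_le_tsum
    intro i
    by_cases hi : i = 0
    · simp [hi]
    · simp only [hi, if_neg hi, hF_def]
      have : ((0:ℕ) = i) = False := by simp [Ne.symm hi]
      simp [this]; exact le_rfl
  · -- convergent case
    have hgs : Summable g :=
      (ENNReal.summable_toReal hD).congr fun i => ENNReal.toReal_ofReal (hgnn i)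
    set d : ℝ := ∑' i, g i with hd_def
    obtain ⟨j, hj⟩ := hq
    have hgj : 0 < g j := mul_pos (hα0 j) (by positivity)
    have hd : 0 < d := Summable.tsum_pos hgs hgnn j hgj
    have hA : 0 < A := (hα0 0).trans_le (hαA 0)
    obtain ⟨ω, hgω⟩ :=
      (hgs.tendsto_atTop_zero.eventually_lt_const (show (0:ℝ) < d^2/(4*A) by positivity)).exists
    -- key inequality : 2 * α ω * q ω ≤ d
    have key : 2 * (α ω * q ω) ≤ d := by
      have h1 : α ω * (α ω * q ω ^ 2) ≤ A * (α ω * q ω ^ 2) :=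
        mul_le_mul_of_nonneg_right (hαA ω) (hgnn ω)
      have h2 : A * (α ω * q ω ^ 2) < A * (d ^ 2 / (4 * A)) :=
        mul_lt_mul_of_pos_left hgω hA
      have h3 : A * (d ^ 2 / (4 * A)) = d ^ 2 / 4 := by field_simp
      nlinarith [sq_nonneg (α ω * q ω)]
    refine ⟨ω, ?_⟩
    -- LHS equals ofReal (α ω)
    have hL : (∑' i : ℕ, ENNReal.ofReal (α i * ((if ω = i then (1:ℝ) else 0))^2))
        = ENNReal.ofReal (α ω) := by
      rw [tsum_eq_single ω]
      · simp
      · intro b hb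
        simp [Ne.symm hb]
    -- RHS: real summand
    set h : ℕ → ℝ := fun i => α i * ((if ω = i then (1:ℝ) else 0) - q i)^2 with hh_def
    have hhnn : ∀ i, 0 ≤ h i := fun i => mul_nonneg (hα0 i).le (sq_nonneg _)
    set e : ℕ → ℝ := fun i => if i = ω then α ω * (1 - 2 * q ω) else 0 with he_def
    have hes : Summable e := (hasSum_ite_eq ω (α ω * (1 - 2 * q ω))).summable
    have hge : ∀ i, h i = g i + e i := by
      intro i
      by_cases hiω : i = ω
      · subst hiω; simp [hh_def, hg_def, he_def]; ring
      · simp [hh_def, hg_def, he_def, hiω, Ne.symm hiω]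
    have hhs : Summable h := by
      rw [show h = g + e from funext hge]; exact hgs.add hes
    have hsum : ∑' i, h i = d + α ω * (1 - 2 * q ω) := by
      rw [show h = g + e from funext hge]
      simp only [Pi.add_apply]
      rw [Summable.tsum_add hgs hes, he_def, tsum_ite_eq]
    have hR : (∑' i : ℕ, ENNReal.ofReal (α i * ((if ω = i then (1:ℝ) else 0) - q i)^2))
        = ENNReal.ofReal (d + α ω * (1 - 2 * q ω)) := by
      rw [← hsum, ← ENNReal.ofReal_tsum_of_nonneg hhnn hhs]
    rw [hL, hR]
    apply ENNReal.ofReal_le_ofReal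
    nlinarith
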